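/- Let k be an algebraically closed field of characteristic 0 and α ∈ k with α(1−α²) ≠ 0. The projective variety in P³ with coordinates (M₁₂, M₁₄, M₂₃, M₃₄) cut out by f₁ = M₁₂M₃₄ + M₁₄M₂₃ and g₁ = M₁₂² + M₁₄² + αM₂₃² − 2M₂₃M₃₄ + αM₃₄² is smooth, i.e., the Jacobian matrix of (f₁, g₁) has rank two at every point of V(f₁, g₁). -/

import Mathlib

theorem stmt_4 (k : Type*) [Field k] [IsAlgClosed k] [CharZero k]
    (α : k) (hα : α * (1 - α ^ 2) ≠ 0)
    (M12 M14 M23 M34 : k) (hne : ¬(M12 = 0 ∧ M14 = 0 ∧ M23 = 0 ∧ M34 = 0))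
    (hf : M12 * M34 + M14 * M23 = 0)
    (hg : M12 ^ 2 + M14 ^ 2 + α * M23 ^ 2 - 2 * M23 * M34 + α * M34 ^ 2 = 0) :
    Matrix.rank !![M34, M23, M14, M12;
                   2 * M12, 2 * M14, 2 * (α * M23 - M34), 2 * (α * M34 - M23)] = 2 := by
  have h1α : (1 - α ^ 2) ≠ 0 := right_ne_zero_of_mul hα
  have key : ∀ a b : k,
      a * M34 + b * (2 * M12) = 0 →
      a * M23 + b * (2 * M14) = 0 →
      a * M14 + b * (2 * (α * M23 - M34)) = 0 →
      a * M12 + b * (2 * (α * M34 - M23)) = 0 →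
      a = 0 ∧ b = 0 := by
    intro a b E1 E2 E3 E4
    by_cases hb : b = 0
    · subst hb
      simp only [zero_mul, add_zero] at E1 E2 E3 E4
      by_cases ha : a = 0
      · exact ⟨ha, rfl⟩
      · exact absurd ⟨by simpa [ha] using mul_eq_zero.mp E4,
          by simpa [ha] using mul_eq_zero.mp E3,
          by simpa [ha] using mul_eq_zero.mp E2,
          by simpa [ha] using mul_eq_zero.mp E1⟩ hne
    · exfalso
      by_cases ha : a = 0
      · subst ha
        simp only [zero_mul, zero_add, mul_eq_zero, hb, false_or] at E1 E2 E3 E4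
        have h12 : M12 = 0 := by
          rcases E1 with h | h
          · exact absurd h two_ne_zero
          · exact h
        have h14 : M14 = 0 := by
          rcases E2 with h | h
          · exact absurd h two_ne_zero
          · exact h
        have e3 : α * M23 - M34 = 0 := by
          rcases E3 with h | h
          · exact absurd h two_ne_zero
          · exact h
        have e4 : α * M34 - M23 = 0 := by
          rcases E4 with h | h
          · exact absurd h two_ne_zero
          · exact h
        have h34 : (1 - α ^ 2) * M34 = 0 := by linear_combination (-α) * e4 - e3
        have h23 : (1 - α ^ 2) * M23 = 0 := by linear_combination (-α) * e3 - e4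
        have hM34 : M34 = 0 := by
          rcases mul_eq_zero.mp h34 with h | h
          · exact absurd h h1α
          · exact h
        have hM23 : M23 = 0 := by
          rcases mul_eq_zero.mp h23 with h | h
          · exact absurd h h1α
          · exact h
        exact hne ⟨h12, h14, hM23, hM34⟩
      · -- a ≠ 0, b ≠ 0
        have hA : 4 * b ^ 2 * M34 = (4 * b ^ 2 * α - a ^ 2) * M23 := by
          linear_combination a * E2 - (2 * b) * E3
        have hB : 4 * b ^ 2 * M23 = (4 * b ^ 2 * α - a ^ 2) * M34 := by
          linear_combination a * E1 - (2 * b) * E4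
        have hsum : a * (M23 ^ 2 + M34 ^ 2) = 0 := by
          linear_combination M34 * E1 + M23 * E2 - 2 * b * hf
        have hsum' : M23 ^ 2 + M34 ^ 2 = 0 := by
          rcases mul_eq_zero.mp hsum with h | h
          · exact absurd h ha
          · exact h
        have hd : 4 * b ^ 2 * (M34 ^ 2 - M23 ^ 2) = 0 := by
          linear_combination M34 * hA - M23 * hB
        have h4b : (4 : k) * b ^ 2 ≠ 0 :=
          mul_ne_zero (by norm_num) (pow_ne_zero _ hb)
        have hd' : M34 ^ 2 - M23 ^ 2 = 0 := (mul_eq_zero.mp hd).resolve_left h4b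
        have h2 : (2 : k) * M23 ^ 2 = 0 := by linear_combination hsum' - hd'
        have hM23 : M23 = 0 := by
          have := (mul_eq_zero.mp h2).resolve_left two_ne_zero
          exact pow_eq_zero_iff (n := 2) (by norm_num) |>.mp this
        have hM34 : M34 = 0 := by
          have h4 : (4 : k) * b ^ 2 * M34 = 0 := by rw [hA, hM23, mul_zero]
          exact (mul_eq_zero.mp h4).resolve_left h4b
        have hM14 : M14 = 0 := by
          have : b * (2 * M14) = 0 := by rw [← E2, hM23]; ring
          have := (mul_eq_zero.mp this).resolve_left hb
          exact (mul_eq_zero.mp this).resolve_left two_ne_zero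
        have hM12 : M12 = 0 := by
          have : b * (2 * M12) = 0 := by rw [← E1, hM34]; ring
          have := (mul_eq_zero.mp this).resolve_left hb
          exact (mul_eq_zero.mp this).resolve_left two_ne_zero
        exact hne ⟨hM12, hM14, hM23, hM34⟩
  have hli : LinearIndependent k
      !![M34, M23, M14, M12;
         2 * M12, 2 * M14, 2 * (α * M23 - M34), 2 * (α * M34 - M23)] := by
    refine Fintype.linearIndependent_iff.mpr ?_
    intro g hg
    rw [Fin.sum_univ_two] at hg
    have h0 := congrFun hg 0
    have h1 := congrFun hg 1
    have h2 := congrFun hg 2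
    have h3 := congrFun hg 3
    simp only [Pi.add_apply, Pi.smul_apply, smul_eq_mul, Pi.zero_apply,
      Matrix.cons_val', Matrix.cons_val_zero, Matrix.cons_val_one, Matrix.head_cons,
      Matrix.empty_val', Matrix.cons_val_fin_one, Matrix.of_apply,
      Matrix.head_fin_const] at h0 h1 h2 h3
    obtain ⟨ha, hbz⟩ := key (g 0) (g 1) h0 h1 h2 h3
    intro i
    fin_cases i <;> assumption
  have := hli.rank_matrix
  simpa using this
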